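/- The function q ↦ H(Y_q) − H(q) (i.e., t_λ with λ = 1) is convex on the probability simplex of input distributions for any fixed channel p(y|x). -/

import Mathlib

open scoped BigOperators

noncomputable section

/-- `p` is a probability mass function on a finite type. -/
def IsPMF {X : Type*} [Fintype X] (p : X → ℝ) : Prop :=
  (∀ x, 0 ≤ p x) ∧ ∑ x, p x = 1

/-- `p` is a joint probability mass function. -/
def IsJointPMF {X Y : Type*} [Fintype X] [Fintype Y] (p : X → Y → ℝ) : Prop :=
  (∀ x y, 0 ≤ p x y) ∧ ∑ x, ∑ y, p x y = 1

/-- Hirschfeld–Gebelein–Rényi maximal correlation of a joint pmf `p`. -/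
def maxCorr {X Y : Type*} [Fintype X] [Fintype Y] (p : X → Y → ℝ) : ℝ :=
  sSup {c : ℝ | ∃ f : X → ℝ, ∃ g : Y → ℝ,
    (∑ x, ∑ y, p x y * f x) = 0 ∧ (∑ x, ∑ y, p x y * g y) = 0 ∧
    (∑ x, ∑ y, p x y * (f x)^2) = 1 ∧ (∑ x, ∑ y, p x y * (g y)^2) = 1 ∧
    c = ∑ x, ∑ y, p x y * f x * g y}

/-- Relative entropy (KL divergence) between pmfs on a finite type. -/
def KL {X : Type*} [Fintype X] (r p : X → ℝ) : ℝ :=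
  ∑ x, r x * Real.log (r x / p x)

/-- `s*(X;Y)` for input distribution `p` and channel `W`. -/
def sStar {X Y : Type*} [Fintype X] [Fintype Y] (p : X → ℝ) (W : X → Y → ℝ) : ℝ :=
  sSup {c : ℝ | ∃ r : X → ℝ, IsPMF r ∧ r ≠ p ∧
    c = KL (fun y => ∑ x, r x * W x y) (fun y => ∑ x, p x * W x y) / KL r p}

/-- Shannon entropy of a pmf on a finite type. -/
def entropy {X : Type*} [Fintype X] (p : X → ℝ) : ℝ :=
  ∑ x, Real.negMulLog (p x)

/-- Mutual information of a joint pmf. -/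
def mutInfo {X Y : Type*} [Fintype X] [Fintype Y] (p : X → Y → ℝ) : ℝ :=
  entropy (fun x => ∑ y, p x y) + entropy (fun y => ∑ x, p x y)
    - entropy (fun z : X × Y => p z.1 z.2)

end

/-- The lower convex envelope of `f` on the probability simplex, evaluated at `q`:
the pointwise supremum of convex minorants of `f`. -/
noncomputable def lce {X : Type*} [Fintype X] (f : (X → ℝ) → ℝ) (q : X → ℝ) : ℝ :=
  sSup {c : ℝ | ∃ g : (X → ℝ) → ℝ, ConvexOn ℝ {r : X → ℝ | IsPMF r} g ∧
    (∀ r, IsPMF r → g r ≤ f r) ∧ c = g q}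

/-- `t_λ(q) = H(Y_q) − λ H(q)` for the channel `W`. -/
noncomputable def tFun {X Y : Type*} [Fintype X] [Fintype Y]
    (W : X → Y → ℝ) (lam : ℝ) (q : X → ℝ) : ℝ :=
  entropy (fun y => ∑ x, q x * W x y) - lam * entropy q



section Aux
open Real

/-- Log-sum inequality. -/
lemma logSum_ineq {ι : Type*} [Fintype ι] (a b : ι → ℝ)
    (ha : ∀ i, 0 ≤ a i) (hb : ∀ i, 0 ≤ b i) (hab : ∀ i, b i = 0 → a i = 0) :
    (∑ i, a i) * Real.log ((∑ i, a i) / (∑ i, b i)) ≤ ∑ i, a i * Real.log (a i / b i) := by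
  set A := ∑ i, a i with hA
  set B := ∑ i, b i with hB
  rcases eq_or_lt_of_le (Finset.sum_nonneg (fun i _ => hb i)) with h0 | hBpos
  · have hb0 : ∀ i, b i = 0 := by
      intro i
      have := (Finset.sum_eq_zero_iff_of_nonneg (fun i _ => hb i)).mp h0.symm
      exact this i (Finset.mem_univ i)
    have ha0 : ∀ i, a i = 0 := fun i => hab i (hb0 i)
    simp [hA, ha0]
  · -- Jensen with weights b i / B and points a i / b i
    have hmain := (convexOn_mul_log).map_sum_le (t := Finset.univ)
      (w := fun i => b i / B) (p := fun i => a i / b i)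
      (fun i _ => div_nonneg (hb i) hBpos.le)
      (by rw [← Finset.sum_div]; exact div_self (ne_of_gt hBpos))
      (fun i _ => div_nonneg (ha i) (hb i))
    have hpt : ∑ i, (b i / B) • (a i / b i) = A / B := by
      rw [hA, Finset.sum_div]
      refine Finset.sum_congr rfl fun i _ => ?_
      rcases eq_or_lt_of_le (hb i) with h | h
      · simp [← h, hab i h.symm]
      · rw [smul_eq_mul, div_mul_div_comm, mul_comm (b i), mul_div_mul_right _ _ h.ne']
    rw [hpt] at hmain
    have hrhs : ∑ i, (b i / B) • ((a i / b i) * Real.log (a i / b i))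
        = (∑ i, a i * Real.log (a i / b i)) / B := by
      rw [Finset.sum_div]
      refine Finset.sum_congr rfl fun i _ => ?_
      rcases eq_or_lt_of_le (hb i) with h | h
      · simp [← h, hab i h.symm]
      · rw [smul_eq_mul, div_mul_eq_mul_div (a i), div_mul_div_comm, mul_comm (b i), mul_div_mul_right _ _ h.ne']
    rw [hrhs] at hmain
    calc A * Real.log (A / B) = B * ((A / B) * Real.log (A / B)) := by
          have hB0 : B ≠ 0 := ne_of_gt hBpos
          field_simp
      _ ≤ B * ((∑ i, a i * Real.log (a i / b i)) / B) :=
          mul_le_mul_of_nonneg_left hmain hBpos.le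
      _ = ∑ i, a i * Real.log (a i / b i) := by
          have hB0 : B ≠ 0 := ne_of_gt hBpos
          field_simp
end Aux

section Aux2
open Real

/-- Data processing inequality for KL divergence through a channel. -/
lemma KL_channel_le {X Y : Type*} [Fintype X] [Fintype Y] (W : X → Y → ℝ)
    (hW : ∀ x, IsPMF (W x)) (r q : X → ℝ) (hr : ∀ x, 0 ≤ r x) (hq : ∀ x, 0 ≤ q x)
    (hac : ∀ x, q x = 0 → r x = 0) :
    KL (fun y => ∑ x, r x * W x y) (fun y => ∑ x, q x * W x y) ≤ KL r q := by
  have step1 : KL (fun y => ∑ x, r x * W x y) (fun y => ∑ x, q x * W x y)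
      ≤ ∑ y, ∑ x, (r x * W x y) * Real.log ((r x * W x y) / (q x * W x y)) := by
    unfold KL
    refine Finset.sum_le_sum fun y _ => ?_
    exact logSum_ineq (fun x => r x * W x y) (fun x => q x * W x y)
      (fun x => mul_nonneg (hr x) ((hW x).1 y))
      (fun x => mul_nonneg (hq x) ((hW x).1 y))
      (fun x h => by
        rcases mul_eq_zero.mp h with h | h
        · rw [hac x h, zero_mul]
        · rw [h, mul_zero])
  refine step1.trans (le_of_eq ?_)
  rw [Finset.sum_comm]
  unfold KL
  refine Finset.sum_congr rfl fun x _ => ?_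
  have : ∀ y, (r x * W x y) * Real.log ((r x * W x y) / (q x * W x y))
      = W x y * (r x * Real.log (r x / q x)) := by
    intro y
    rcases eq_or_lt_of_le ((hW x).1 y) with hw | hw
    · simp [← hw]
    rcases eq_or_lt_of_le (hr x) with hrx | hrx
    · simp [← hrx]
    have hqx : 0 < q x := lt_of_le_of_ne (hq x) (fun h => by
      have := hac x h.symm; linarith)
    have : (r x * W x y) / (q x * W x y) = r x / q x := by
      field_simp
    rw [this]; ring
  rw [Finset.sum_congr rfl fun y _ => this y, ← Finset.sum_mul, (hW x).2, one_mul]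

/-- Pointwise entropy decomposition. -/
lemma negMulLog_combo (a b p r : ℝ) (ha : 0 < a) (hb : 0 < b)
    (hp : 0 ≤ p) (hrr : 0 ≤ r) :
    Real.negMulLog (a * p + b * r) =
      a * Real.negMulLog p + b * Real.negMulLog r
      + a * (p * Real.log (p / (a * p + b * r)))
      + b * (r * Real.log (r / (a * p + b * r))) := by
  set s := a * p + b * r with hs
  rcases eq_or_lt_of_le hp with hp0 | hp0 <;> rcases eq_or_lt_of_le hrr with hr0 | hr0
  · simp [hs, ← hp0, ← hr0]
  · rw [hs, ← hp0]
    simp only [Real.negMulLog, mul_zero, zero_mul, add_zero, zero_add, neg_mul, neg_zero]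
    rw [Real.log_div (ne_of_gt hr0) (ne_of_gt (mul_pos hb hr0))]
    ring
  · rw [hs, ← hr0]
    simp only [Real.negMulLog, mul_zero, zero_mul, add_zero, zero_add, neg_mul, neg_zero]
    rw [Real.log_div (ne_of_gt hp0) (ne_of_gt (mul_pos ha hp0))]
    ring
  · have hspos : 0 < s := by rw [hs]; positivity
    simp only [Real.negMulLog, neg_mul]
    rw [Real.log_div (ne_of_gt hp0) (ne_of_gt hspos),
      Real.log_div (ne_of_gt hr0) (ne_of_gt hspos)]
    ring

/-- Entropy decomposition for a convex combination. -/
lemma entropy_combo {X : Type*} [Fintype X] (a b : ℝ) (p r : X → ℝ)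
    (ha : 0 < a) (hb : 0 < b) (hp : ∀ x, 0 ≤ p x) (hrr : ∀ x, 0 ≤ r x) :
    entropy (fun x => a * p x + b * r x) =
      a * entropy p + b * entropy r
      + a * KL p (fun x => a * p x + b * r x)
      + b * KL r (fun x => a * p x + b * r x) := by
  unfold entropy KL
  rw [Finset.mul_sum, Finset.mul_sum, Finset.mul_sum, Finset.mul_sum,
    ← Finset.sum_add_distrib, ← Finset.sum_add_distrib, ← Finset.sum_add_distrib]
  exact Finset.sum_congr rfl fun x _ => negMulLog_combo a b (p x) (r x) ha hb (hp x) (hrr x)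

end Aux2

/-- `q ↦ H(Y_q) − H(q)`, i.e. `t_λ` with `λ = 1`, is convex on the
probability simplex. -/
theorem tFun_one_convex {X Y : Type*} [Fintype X] [Fintype Y]
    (W : X → Y → ℝ) (hW : ∀ x, IsPMF (W x)) :
    ConvexOn ℝ {q : X → ℝ | IsPMF q} (tFun W 1) := by
  constructor
  · rintro q1 hq1 q2 hq2 a b ha hb hab
    exact ⟨fun x => by
      have := hq1.1 x; have := hq2.1 x
      simp only [Pi.add_apply, Pi.smul_apply, smul_eq_mul]
      positivity,
     by
      simp only [Pi.add_apply, Pi.smul_apply, smul_eq_mul]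
      rw [Finset.sum_add_distrib, ← Finset.mul_sum, ← Finset.mul_sum, hq1.2, hq2.2]
      linarith⟩
  · rintro q1 hq1 q2 hq2 a b ha hb hab
    rcases eq_or_lt_of_le ha with ha0 | ha0
    · have hb1 : b = 1 := by linarith
      simp [← ha0, hb1]
    rcases eq_or_lt_of_le hb with hb0 | hb0
    · have ha1 : a = 1 := by linarith
      simp [← hb0, ha1]
    have hcomb : (a • q1 + b • q2) = fun x => a * q1 x + b * q2 x := by
      funext x; simp [smul_eq_mul]
    rw [hcomb]
    set s : X → ℝ := fun x => a * q1 x + b * q2 x with hsdef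
    have hYs : (fun y => ∑ x, s x * W x y)
        = fun y => a * (∑ x, q1 x * W x y) + b * (∑ x, q2 x * W x y) := by
      funext y
      rw [Finset.mul_sum, Finset.mul_sum, ← Finset.sum_add_distrib]
      exact Finset.sum_congr rfl fun x _ => by rw [hsdef]; ring
    have hHin : entropy s = a * entropy q1 + b * entropy q2
        + a * KL q1 s + b * KL q2 s :=
      entropy_combo a b q1 q2 ha0 hb0 hq1.1 hq2.1
    have hHout : entropy (fun y => ∑ x, s x * W x y)
        = a * entropy (fun y => ∑ x, q1 x * W x y) + b * entropy (fun y => ∑ x, q2 x * W x y)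
          + a * KL (fun y => ∑ x, q1 x * W x y) (fun y => ∑ x, s x * W x y)
          + b * KL (fun y => ∑ x, q2 x * W x y) (fun y => ∑ x, s x * W x y) := by
      rw [hYs]
      exact entropy_combo a b (fun y => ∑ x, q1 x * W x y) (fun y => ∑ x, q2 x * W x y)
        ha0 hb0
        (fun y => Finset.sum_nonneg fun x _ => mul_nonneg (hq1.1 x) ((hW x).1 y))
        (fun y => Finset.sum_nonneg fun x _ => mul_nonneg (hq2.1 x) ((hW x).1 y))
    have hs_nonneg : ∀ x, 0 ≤ s x := fun x => by
      have := hq1.1 x; have := hq2.1 x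
      rw [hsdef]; positivity
    have hac1 : ∀ x, s x = 0 → q1 x = 0 := fun x h => by
      have h1 := hq1.1 x; have h2 := hq2.1 x
      rw [hsdef] at h; simp only at h; nlinarith
    have hac2 : ∀ x, s x = 0 → q2 x = 0 := fun x h => by
      have h1 := hq1.1 x; have h2 := hq2.1 x
      rw [hsdef] at h; simp only at h; nlinarith
    have hdpi1 := KL_channel_le W hW q1 s hq1.1 hs_nonneg hac1
    have hdpi2 := KL_channel_le W hW q2 s hq2.1 hs_nonneg hac2
    simp only [tFun, smul_eq_mul]
    rw [hHout, hHin]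
    nlinarith
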